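/- Let X be a Polish space, R ⊆ C_b(X) a subring that approximates open sets, V a normed R-module and N a local vector measure on V. Then N has bounded variation, i.e. |N|(X) < ∞; more precisely, |N|(A) = ‖N(A)‖' for every Borel set A ⊆ X. -/

import Mathlib

open BoundedContinuousFunction Filter Topology Set MeasureTheory ENNReal
open scoped Function

noncomputable section

/-- A subring `R ⊆ C_b(X)` approximates open sets. -/
structure ApproximatesOpenSets {X : Type*} [TopologicalSpace X] (R : Subring (X →ᵇ ℝ)) : Prop where
  const_mem : ∀ c : ℝ, const X c ∈ R
  sup_mem : ∀ f g : X →ᵇ ℝ, f ∈ R → g ∈ R → ∃ h ∈ R, ∀ x, h x = max (f x) (g x)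
  inf_mem : ∀ f g : X →ᵇ ℝ, f ∈ R → g ∈ R → ∃ h ∈ R, ∀ x, h x = min (f x) (g x)
  const_mul_mem : ∀ (c : ℝ) (f : X →ᵇ ℝ), f ∈ R → const X c * f ∈ R
  approx : ∀ A : Set X, IsOpen A →
    ∃ f : ℕ → X →ᵇ ℝ, (∀ k, f k ∈ R) ∧ (∀ x, Monotone fun k => f k x) ∧
      ∀ x, Tendsto (fun k => f k x) atTop (𝓝 (A.indicator (fun _ => (1:ℝ)) x))

/-- The action of constant functions in `R` agrees with the real scalar multiplication. -/
def ConstSMulCompat {X : Type*} [TopologicalSpace X] (R : Subring (X →ᵇ ℝ)) (V : Type*)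
    [NormedAddCommGroup V] [NormedSpace ℝ V] [Module R V] : Prop :=
  ∀ (c : ℝ) (hc : const X c ∈ R) (v : V), (⟨const X c, hc⟩ : ↥R) • v = c • v

/-- The compatibility inequality defining a normed `R`-module. -/
def NormSMulCompat {X : Type*} [TopologicalSpace X] (R : Subring (X →ᵇ ℝ)) (V : Type*)
    [NormedAddCommGroup V] [Module R V] : Prop :=
  ∀ (s : Finset ℕ) (f : ℕ → ↥R) (v : ℕ → V) (M K : ℝ), 0 ≤ M → 0 ≤ K →
    ((s : Set ℕ).Pairwise fun i j =>
      Disjoint (tsupport ⇑((f i : X →ᵇ ℝ))) (tsupport ⇑((f j : X →ᵇ ℝ)))) →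
    (∀ i ∈ s, ‖(f i : X →ᵇ ℝ)‖ ≤ M) → (∀ i ∈ s, ‖v i‖ ≤ K) →
    ‖∑ i ∈ s, f i • v i‖ ≤ M * K

/-- The local seminorm `‖v‖_{|A}`. -/
def locNorm {X : Type*} [TopologicalSpace X] (R : Subring (X →ᵇ ℝ)) {V : Type*}
    [NormedAddCommGroup V] [Module R V] (A : Set X) (v : V) : ℝ :=
  sSup {r : ℝ | ∃ f : ↥R, tsupport ⇑((f : X →ᵇ ℝ)) ⊆ A ∧ ‖(f : X →ᵇ ℝ)‖ ≤ 1 ∧ r = ‖f • v‖}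

/-- The germ seminorm `|v|_g(x)`. -/
def germNorm {X : Type*} [TopologicalSpace X] (R : Subring (X →ᵇ ℝ)) {V : Type*}
    [NormedAddCommGroup V] [Module R V] (v : V) (x : X) : ℝ :=
  sInf {r : ℝ | ∃ A : Set X, IsOpen A ∧ x ∈ A ∧ r = locNorm R A v}

/-- `supp v ⊆ B`: there is a closed set `C ⊆ B` with `‖v‖_{|X∖C} = 0`. -/
def suppIn {X : Type*} [TopologicalSpace X] (R : Subring (X →ᵇ ℝ)) {V : Type*}
    [NormedAddCommGroup V] [Module R V] (v : V) (B : Set X) : Prop :=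
  ∃ C : Set X, IsClosed C ∧ C ⊆ B ∧ locNorm R Cᶜ v = 0

/-- σ-additivity, with convergence of the partial sums in norm. -/
def SigmaAdditive {X : Type*} [MeasurableSpace X] {E : Type*} [NormedAddCommGroup E]
    (N : Set X → E) : Prop :=
  ∀ A : ℕ → Set X, (∀ n, MeasurableSet (A n)) → Pairwise (Disjoint on A) →
    Tendsto (fun n => ∑ k ∈ Finset.range n, N (A k)) atTop (𝓝 (N (⋃ k, A k)))

/-- A local vector measure on the normed `R`-module `V`. -/
structure IsLocalVectorMeasure {X : Type*} [TopologicalSpace X] [MeasurableSpace X]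
    (R : Subring (X →ᵇ ℝ)) {V : Type*} [NormedAddCommGroup V] [NormedSpace ℝ V] [Module R V]
    (N : Set X → V →L[ℝ] ℝ) : Prop where
  sigma_additive : SigmaAdditive N
  weakly_local : ∀ A : Set X, IsOpen A → ∀ v : V, locNorm R A v = 0 → N A v = 0

/-- The total variation `|N|(B)`, as the supremum of `Σ ‖N(A_i)‖` over finite Borel
partitions of `B`. -/
def totalVar {X : Type*} [MeasurableSpace X] {E : Type*} [NormedAddCommGroup E]
    (N : Set X → E) (B : Set X) : ℝ≥0∞ :=
  ⨆ (n : ℕ) (A : Fin n → Set X)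
    (_ : (∀ i, MeasurableSet (A i)) ∧ Pairwise (Disjoint on A) ∧ (⋃ i, A i) = B),
      ∑ i, (‖N (A i)‖₊ : ℝ≥0∞)

/-- Tightness of a functional `F ∈ V'` with respect to `R`. -/
def IsTight {X : Type*} [TopologicalSpace X] (R : Subring (X →ᵇ ℝ)) {V : Type*}
    [NormedAddCommGroup V] [NormedSpace ℝ V] [Module R V] (F : V →L[ℝ] ℝ) : Prop :=
  ∀ (v : V) (f : ℕ → ↥R),
    (∀ x, Antitone fun n => ((f n : X →ᵇ ℝ)) x) →
    (∀ x, Tendsto (fun n => ((f n : X →ᵇ ℝ)) x) atTop (𝓝 (0:ℝ))) →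
    Tendsto (fun n => F ((f n) • v)) atTop (𝓝 (0:ℝ))

set_option linter.unusedSectionVars false

section AuxStatement5
set_option maxHeartbeats 1000000

variable {X : Type*} [MetricSpace X] [MeasurableSpace X] [BorelSpace X]
variable {V : Type*} [NormedAddCommGroup V] [NormedSpace ℝ V]
variable {R : Subring (X →ᵇ ℝ)} [Module R V]
variable {N : Set X → V →L[ℝ] ℝ}

/-- A σ-additive vector measure vanishes on the empty set. -/
theorem sa_empty (h : SigmaAdditive N) : N ∅ = 0 := by
  have h1 := h (fun _ => ∅) (fun _ => MeasurableSet.empty)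
    (fun i j hij => by simp [Function.onFun])
  simp only [Set.iUnion_empty] at h1
  have h2 : Tendsto (fun n => (∑ k ∈ Finset.range (n + 1), N (∅ : Set X))
      - ∑ k ∈ Finset.range n, N (∅ : Set X)) atTop (𝓝 (N ∅ - N ∅)) :=
    (h1.comp (tendsto_add_atTop_nat 1)).sub h1
  have h3 : (fun n => (∑ k ∈ Finset.range (n + 1), N (∅ : Set X))
      - ∑ k ∈ Finset.range n, N (∅ : Set X)) = fun _ => N ∅ := by
    funext n; rw [Finset.sum_range_succ]; abel
  rw [h3, sub_self] at h2
  exact tendsto_nhds_unique tendsto_const_nhds h2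

/-- Finite additivity. -/
theorem sa_union (h : SigmaAdditive N) {A B : Set X} (hA : MeasurableSet A)
    (hB : MeasurableSet B) (hAB : Disjoint A B) : N (A ∪ B) = N A + N B := by
  classical
  set f : ℕ → Set X := fun k => if k = 0 then A else if k = 1 then B else ∅ with hf
  have hmeas : ∀ k, MeasurableSet (f k) := by
    intro k; dsimp only [f]
    split
    · exact hA
    · split
      · exact hB
      · exact MeasurableSet.empty
  have hdis : Pairwise (Disjoint on f) := by
    intro i j hij
    dsimp only [Function.onFun, f]
    split_ifs with h1 h2 h3 h4 h5 h6 h7 <;>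
      first
        | (exfalso; omega)
        | exact hAB
        | exact hAB.symm
        | simp
  have hu : (⋃ k, f k) = A ∪ B := by
    apply Set.Subset.antisymm
    · intro x hx
      rcases Set.mem_iUnion.1 hx with ⟨k, hk⟩
      dsimp only [f] at hk
      split_ifs at hk with h1 h2
      · exact Or.inl hk
      · exact Or.inr hk
      · exact absurd hk (Set.notMem_empty x)
    · intro x hx
      rcases hx with hx | hx
      · exact Set.mem_iUnion.2 ⟨0, by simp [f, hx]⟩
      · exact Set.mem_iUnion.2 ⟨1, by simp [f, hx]⟩
  have h1 := h f hmeas hdis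
  rw [hu] at h1
  have h2 : (fun n => ∑ k ∈ Finset.range n, N (f k)) =ᶠ[atTop] (fun _ => N A + N B) := by
    filter_upwards [eventually_ge_atTop 2] with n hn
    have hsub : Finset.range 2 ⊆ Finset.range n := Finset.range_subset_range.2 hn
    have : ∑ k ∈ Finset.range n, N (f k) = ∑ k ∈ Finset.range 2, N (f k) := by
      refine (Finset.sum_subset hsub ?_).symm
      intro x _ hx2
      have hx0 : x ≠ 0 := by intro h; apply hx2; simp [h]
      have hx1 : x ≠ 1 := by intro h; apply hx2; simp [h]
      simp only [f, if_neg hx0, if_neg hx1]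
      exact sa_empty h
    rw [this]
    rw [Finset.sum_range_succ, Finset.sum_range_one]
    simp [f]
  exact tendsto_nhds_unique (h1.congr' h2) tendsto_const_nhds

/-- Norm-convergence along monotone sequences of measurable sets. -/
theorem sa_tendsto_mono (h : SigmaAdditive N) {E : ℕ → Set X} (hE : ∀ n, MeasurableSet (E n))
    (hmono : Monotone E) : Tendsto (fun n => N (E n)) atTop (𝓝 (N (⋃ n, E n))) := by
  have hmeas : ∀ n, MeasurableSet (disjointed E n) := MeasurableSet.disjointed hE
  have h1 := h _ hmeas (disjoint_disjointed E)
  rw [iUnion_disjointed] at h1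
  have key : ∀ n, ∑ k ∈ Finset.range (n + 1), N (disjointed E k) = N (E n) := by
    intro n
    induction n with
    | zero => simp [disjointed_zero]
    | succ n ih =>
      rw [Finset.sum_range_succ, ih, hmono.disjointed_add_one]
      rw [← sa_union h (hE n) ((hE (n + 1)).diff (hE n)) disjoint_sdiff_self_right,
        Set.union_diff_cancel (hmono (Nat.le_succ n))]
  have h2 := h1.comp (tendsto_add_atTop_nat 1)
  refine h2.congr fun n => ?_
  exact key n

/-- Scalar σ-additivity. -/
theorem sa_scalar_tendsto (h : SigmaAdditive N) (v : V) {g : ℕ → Set X}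
    (hg : ∀ i, MeasurableSet (g i)) (hgd : Pairwise (Disjoint on g)) :
    Tendsto (fun n => ∑ k ∈ Finset.range n, N (g k) v) atTop (𝓝 (N (⋃ i, g i) v)) := by
  have h1 := h g hg hgd
  have h2 := ((ContinuousLinearMap.apply ℝ ℝ v).continuous.tendsto _).comp h1
  refine h2.congr fun n => ?_
  simp

open scoped Classical in
/-- The scalar measure `E ↦ N(E)(v)` as a mathlib signed measure. -/
def scalarMeasure (h : SigmaAdditive N) (v : V) : MeasureTheory.SignedMeasure X where
  measureOf' E := if MeasurableSet E then N E v else 0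
  empty' := by simp [sa_empty h]
  not_measurable' := fun s hs => if_neg hs
  m_iUnion' := by
    classical
    intro f hf hd
    set a : ℕ → ℝ := fun i => N (f i) v with ha
    have hL : Tendsto (fun n => ∑ k ∈ Finset.range n, a k) atTop (𝓝 (N (⋃ i, f i) v)) :=
      sa_scalar_tendsto h v hf hd
    -- positive part
    set gP : ℕ → Set X := fun i => if 0 ≤ a i then f i else ∅ with hgP
    have hgPm : ∀ i, MeasurableSet (gP i) := fun i => by
      dsimp only [gP]; split
      · exact hf i
      · exact MeasurableSet.empty
    have hgPd : Pairwise (Disjoint on gP) := fun i j hij => by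
      dsimp only [Function.onFun, gP]
      split <;> split <;> first | exact hd hij | simp
    set b : ℕ → ℝ := fun i => if 0 ≤ a i then a i else 0 with hb
    have hbval : ∀ i, N (gP i) v = b i := fun i => by
      dsimp only [gP, b]; split
      · rfl
      · rw [sa_empty h]; rfl
    have hbnn : ∀ i, 0 ≤ b i := fun i => by
      dsimp only [b]; split
      · assumption
      · exact le_rfl
    have hPb : Tendsto (fun n => ∑ k ∈ Finset.range n, b k) atTop (𝓝 (N (⋃ i, gP i) v)) := by
      refine (sa_scalar_tendsto h v hgPm hgPd).congr fun n => ?_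
      exact Finset.sum_congr rfl fun k _ => hbval k
    have hbmono : Monotone (fun n => ∑ k ∈ Finset.range n, b k) := by
      intro m n hmn
      exact Finset.sum_le_sum_of_subset_of_nonneg (Finset.range_subset_range.2 hmn)
        (fun i _ _ => hbnn i)
    have hbsum : Summable b :=
      summable_of_sum_range_le hbnn (fun n => hbmono.ge_of_tendsto hPb n)
    -- negative part
    set gN : ℕ → Set X := fun i => if 0 ≤ a i then ∅ else f i with hgN
    have hgNm : ∀ i, MeasurableSet (gN i) := fun i => by
      dsimp only [gN]; split
      · exact MeasurableSet.empty
      · exact hf i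
    have hgNd : Pairwise (Disjoint on gN) := fun i j hij => by
      dsimp only [Function.onFun, gN]
      split <;> split <;> first | exact hd hij | simp
    set c : ℕ → ℝ := fun i => if 0 ≤ a i then 0 else -a i with hc
    have hcval : ∀ i, N (gN i) v = -c i := fun i => by
      dsimp only [gN, c]; split
      · rw [sa_empty h]; simp
      · simp; rfl
    have hcnn : ∀ i, 0 ≤ c i := fun i => by
      dsimp only [c]; split
      · exact le_rfl
      · linarith [lt_of_not_ge (by assumption : ¬ (0:ℝ) ≤ a i)]
    have hQc : Tendsto (fun n => ∑ k ∈ Finset.range n, c k) atTop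
        (𝓝 (-(N (⋃ i, gN i) v))) := by
      have := (sa_scalar_tendsto h v hgNm hgNd).neg
      refine this.congr fun n => ?_
      rw [← Finset.sum_neg_distrib]
      exact Finset.sum_congr rfl fun k _ => by rw [hcval k, neg_neg]
    have hcmono : Monotone (fun n => ∑ k ∈ Finset.range n, c k) := by
      intro m n hmn
      exact Finset.sum_le_sum_of_subset_of_nonneg (Finset.range_subset_range.2 hmn)
        (fun i _ _ => hcnn i)
    have hcsum : Summable c :=
      summable_of_sum_range_le hcnn (fun n => hcmono.ge_of_tendsto hQc n)
    have hsa : Summable a := by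
      refine (hbsum.sub hcsum).congr fun i => ?_
      dsimp only [a, b, c]; split_ifs <;> ring
    have hts := hsa.hasSum.tendsto_sum_nat
    have heq : (∑' i, a i) = N (⋃ i, f i) v := tendsto_nhds_unique hts hL
    have hfin : HasSum a (N (⋃ i, f i) v) := heq ▸ hsa.hasSum
    have e1 : (fun i => if MeasurableSet (f i) then N (f i) v else 0) = a := by
      funext i; rw [if_pos (hf i)]
    show HasSum (fun i => if MeasurableSet (f i) then N (f i) v else 0)
      (if MeasurableSet (⋃ i, f i) then N (⋃ i, f i) v else 0)
    rw [e1, if_pos (MeasurableSet.iUnion hf)]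
    exact hfin

theorem abs_apply_le_tv (s : MeasureTheory.SignedMeasure X) {E : Set X}
    (hE : MeasurableSet E) : |s E| ≤ (s.totalVariation E).toReal := by
  conv_lhs => rw [← s.toSignedMeasure_toJordanDecomposition]
  set j := s.toJordanDecomposition with hj
  rw [MeasureTheory.JordanDecomposition.toSignedMeasure, MeasureTheory.VectorMeasure.sub_apply,
    MeasureTheory.Measure.toSignedMeasure_apply_measurable hE,
    MeasureTheory.Measure.toSignedMeasure_apply_measurable hE,
    MeasureTheory.SignedMeasure.totalVariation, MeasureTheory.Measure.add_apply,
    ENNReal.toReal_add (measure_ne_top _ _) (measure_ne_top _ _)]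
  have h1 := ENNReal.toReal_nonneg (a := j.posPart E)
  have h2 := ENNReal.toReal_nonneg (a := j.negPart E)
  simp only [MeasureTheory.measureReal_def, ← hj]
  rw [abs_le]
  constructor <;> [skip; skip] <;> [linarith; linarith]

/-- Norm bound for a single scalar action. -/
theorem norm_subring_smul_le (hnorm : NormSMulCompat R V) (f : ↥R) (v : V) :
    ‖f • v‖ ≤ ‖(f : X →ᵇ ℝ)‖ * ‖v‖ := by
  have := hnorm {0} (fun _ => f) (fun _ => v) ‖(f : X →ᵇ ℝ)‖ ‖v‖ (norm_nonneg _)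
    (norm_nonneg _) (by simp) (fun i _ => le_rfl) (fun i _ => le_rfl)
  simpa using this

theorem zero_mem_locSet (A : Set X) (v : V) :
    (0 : ℝ) ∈ {r : ℝ | ∃ f : ↥R, tsupport ⇑((f : X →ᵇ ℝ)) ⊆ A ∧ ‖(f : X →ᵇ ℝ)‖ ≤ 1 ∧
      r = ‖f • v‖} := by
  refine ⟨0, ?_, by simp, by simp⟩
  have h0 : ⇑(((0 : ↥R) : X →ᵇ ℝ)) = (0 : X → ℝ) := by
    ext x; simp
  rw [h0, tsupport_eq_empty_iff.2 rfl]
  exact Set.empty_subset A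

theorem locSet_bddAbove (hnorm : NormSMulCompat R V) (A : Set X) (v : V) :
    BddAbove {r : ℝ | ∃ f : ↥R, tsupport ⇑((f : X →ᵇ ℝ)) ⊆ A ∧ ‖(f : X →ᵇ ℝ)‖ ≤ 1 ∧
      r = ‖f • v‖} := by
  refine ⟨‖v‖, ?_⟩
  rintro r ⟨f, hsupp, hle, rfl⟩
  calc ‖f • v‖ ≤ ‖(f : X →ᵇ ℝ)‖ * ‖v‖ := norm_subring_smul_le hnorm f v
    _ ≤ 1 * ‖v‖ := by
        exact mul_le_mul_of_nonneg_right hle (norm_nonneg v)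
    _ = ‖v‖ := one_mul _

theorem locNorm_nonneg (hnorm : NormSMulCompat R V) (A : Set X) (v : V) :
    0 ≤ locNorm R A v :=
  le_csSup (locSet_bddAbove hnorm A v) (zero_mem_locSet A v)

theorem locNorm_le {A : Set X} {v : V} {c : ℝ}
    (h : ∀ f : ↥R, tsupport ⇑((f : X →ᵇ ℝ)) ⊆ A → ‖(f : X →ᵇ ℝ)‖ ≤ 1 → ‖f • v‖ ≤ c) :
    locNorm R A v ≤ c := by
  refine csSup_le ⟨0, zero_mem_locSet A v⟩ ?_
  rintro r ⟨f, h1, h2, rfl⟩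
  exact h f h1 h2

theorem locNorm_mono (hnorm : NormSMulCompat R V) {A B : Set X} (hAB : A ⊆ B) (v : V) :
    locNorm R A v ≤ locNorm R B v := by
  refine csSup_le_csSup (locSet_bddAbove hnorm B v) ⟨0, zero_mem_locSet A v⟩ ?_
  rintro r ⟨f, h1, h2, rfl⟩
  exact ⟨f, h1.trans hAB, h2, rfl⟩

theorem locNorm_smul_eq_zero (hnorm : NormSMulCompat R V) {O : Set X} (f : ↥R) (v : V)
    (hf : ∀ x ∈ O, (f : X →ᵇ ℝ) x = 0) : locNorm R O (f • v) = 0 := by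
  apply le_antisymm
  · refine locNorm_le ?_
    intro g hg hg1
    have hgf : g * f = 0 := by
      apply Subtype.ext
      rw [MulMemClass.coe_mul]
      ext x
      by_cases hx : x ∈ O
      · simp [hf x hx]
      · have : (g : X →ᵇ ℝ) x = 0 :=
          image_eq_zero_of_notMem_tsupport (fun hmem => hx (hg hmem))
        simp [this]
    rw [← mul_smul, hgf, zero_smul, norm_zero]
  · exact locNorm_nonneg hnorm O (f • v)

/-- Locality for Borel subsets of an open set. -/
theorem borel_local (hnorm : NormSMulCompat R V) (hN : IsLocalVectorMeasure R N)
    {O : Set X} (hO : IsOpen O) {z : V} (hz : locNorm R O z = 0)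
    {D : Set X} (hD : MeasurableSet D) (hDO : D ⊆ O) : N D z = 0 := by
  have hNO : N O z = 0 := hN.weakly_local O hO z hz
  have main : ∀ ⦃t : Set X⦄, MeasurableSet t → N (O ∩ t) z = 0 := by
    refine MeasurableSpace.induction_on_inter (C := fun t _ => N (O ∩ t) z = 0)
      (by rw [BorelSpace.measurable_eq (α := X)]; rfl)
      (fun s hs t ht _ => IsOpen.inter hs ht) ?_ ?_ ?_ ?_
    · show N (O ∩ (∅ : Set X)) z = 0
      rw [Set.inter_empty, sa_empty hN.sigma_additive]; rfl
    · intro t ht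
      have hloc : locNorm R (O ∩ t) z = 0 :=
        le_antisymm ((locNorm_mono hnorm Set.inter_subset_left z).trans_eq hz)
          (locNorm_nonneg hnorm _ z)
      exact hN.weakly_local (O ∩ t) (hO.inter ht) z hloc
    · intro t ht ih
      have hdisj : Disjoint (O ∩ t) (O ∩ tᶜ) :=
        disjoint_compl_right.mono Set.inter_subset_right Set.inter_subset_right
      have hu := sa_union hN.sigma_additive (hO.measurableSet.inter ht)
        (hO.measurableSet.inter ht.compl) hdisj
      rw [Set.inter_union_compl] at hu
      have := congrArg (fun T => T z) hu
      simp only [ContinuousLinearMap.add_apply] at this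
      rw [hNO, ih] at this
      linarith [this]
    · intro f hfd hfm ih
      rw [Set.inter_iUnion]
      have hgd : Pairwise (Disjoint on fun i => O ∩ f i) := fun i j hij =>
        (hfd hij).mono Set.inter_subset_right Set.inter_subset_right
      have h1 := sa_scalar_tendsto hN.sigma_additive z
        (fun i => hO.measurableSet.inter (hfm i)) hgd
      have h2 : (fun n => ∑ k ∈ Finset.range n, N (O ∩ f k) z) = fun _ => (0:ℝ) := by
        funext n
        exact Finset.sum_eq_zero fun k _ => ih k
      rw [h2] at h1
      exact (tendsto_nhds_unique h1 tendsto_const_nhds)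
  have : O ∩ D = D := Set.inter_eq_self_of_subset_right hDO
  rw [← this]
  exact main hD

/-- `V'`-elements nearly attaining the operator norm. -/
theorem exists_near_opNorm (T : V →L[ℝ] ℝ) {ε : ℝ} (hε : 0 < ε) :
    ∃ v : V, ‖v‖ ≤ 1 ∧ ‖T‖ - ε < T v := by
  by_cases h0 : ‖T‖ - ε < 0
  · exact ⟨0, by simp, by simpa using h0⟩
  · obtain ⟨x, hx, hx2⟩ := T.exists_lt_apply_of_lt_opNorm (r := ‖T‖ - ε) (by linarith)
    rcases le_or_gt 0 (T x) with h | h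
    · exact ⟨x, hx.le, by rwa [Real.norm_eq_abs, abs_of_nonneg h] at hx2⟩
    · refine ⟨-x, by simpa using hx.le, ?_⟩
      rw [map_neg]
      rwa [Real.norm_eq_abs, abs_of_neg h] at hx2

/-- Nice approximating sequences for open sets. -/
theorem approx_nice (hR : ApproximatesOpenSets R) {W : Set X} (hW : IsOpen W) :
    ∃ g : ℕ → ↥R, (∀ k x, 0 ≤ (g k : X →ᵇ ℝ) x) ∧ (∀ k x, (g k : X →ᵇ ℝ) x ≤ 1) ∧
      (∀ x, Monotone fun k => (g k : X →ᵇ ℝ) x) ∧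
      (∀ k, tsupport ⇑((g k : X →ᵇ ℝ)) ⊆ W) ∧
      (∀ x ∈ W, Tendsto (fun k => (g k : X →ᵇ ℝ) x) atTop (𝓝 1)) ∧
      (∀ k, ‖(g k : X →ᵇ ℝ)‖ ≤ 1) := by
  obtain ⟨f, hfR, hfmono, hftend⟩ := hR.approx W hW
  have hfle : ∀ k x, f k x ≤ W.indicator (fun _ => (1:ℝ)) x := fun k x =>
    (hfmono x).ge_of_tendsto (hftend x) k
  have hind_le : ∀ x, W.indicator (fun _ => (1:ℝ)) x ≤ 1 := fun x => by
    rw [Set.indicator]; split <;> norm_num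
  -- truncation
  have hmem : ∀ k, const X 2 * f k - const X 1 ∈ R := fun k =>
    Subring.sub_mem R (hR.const_mul_mem 2 (f k) (hfR k)) (hR.const_mem 1)
  have hex : ∀ k, ∃ h ∈ R, ∀ x,
      h x = max ((const X 2 * f k - const X 1 : X →ᵇ ℝ) x) ((const X 0 : X →ᵇ ℝ) x) :=
    fun k => hR.sup_mem _ _ (hmem k) (hR.const_mem 0)
  choose h hhR hhval using hex
  have hval : ∀ k x, h k x = max (2 * f k x - 1) 0 := by
    intro k x
    rw [hhval k x]
    simp [BoundedContinuousFunction.coe_sub]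
  refine ⟨fun k => ⟨h k, hhR k⟩, ?_, ?_, ?_, ?_, ?_, ?_⟩
  · intro k x
    rw [hval k x]; exact le_max_right _ _
  · intro k x
    rw [hval k x]
    apply max_le _ zero_le_one
    have := hfle k x
    have := hind_le x
    linarith
  · intro x k l hkl
    simp only
    rw [hval k x, hval l x]
    have := hfmono x hkl
    apply max_le_max _ le_rfl
    linarith
  · intro k
    have hsub : {x | h k x ≠ 0} ⊆ {x | 1/2 ≤ f k x} := by
      intro x hx
      simp only [Set.mem_setOf_eq] at hx ⊢
      rw [hval k x] at hx
      by_contra hcon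
      push_neg at hcon
      have : max (2 * f k x - 1) 0 = 0 := max_eq_right (by linarith)
      exact hx this
    have hclosed : IsClosed {x | 1/2 ≤ f k x} :=
      isClosed_le continuous_const (f k).continuous
    have hWsub : {x | 1/2 ≤ f k x} ⊆ W := by
      intro x hx
      simp only [Set.mem_setOf_eq] at hx
      by_contra hxW
      have h0 : W.indicator (fun _ => (1:ℝ)) x = 0 := Set.indicator_of_notMem hxW _
      have h1 := hfle k x
      rw [h0] at h1
      linarith
    exact (closure_minimal hsub hclosed).trans hWsub
  · intro x hx
    have h1 : Tendsto (fun k => f k x) atTop (𝓝 1) := by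
      have := hftend x
      rwa [Set.indicator_of_mem hx] at this
    have h2 : Tendsto (fun k => max (2 * f k x - 1) 0) atTop (𝓝 (max (2 * 1 - 1) 0)) :=
      Tendsto.max (((h1.const_mul 2).sub_const 1)) tendsto_const_nhds
    norm_num at h2
    refine h2.congr fun k => ?_
    exact (hval k x).symm
  · intro k
    refine (BoundedContinuousFunction.norm_le zero_le_one).2 fun x => ?_
    rw [Real.norm_eq_abs, abs_le]
    constructor
    · rw [hval k x]; have := le_max_right (2 * f k x - 1) 0; linarith
    · rw [hval k x]
      apply max_le _ zero_le_one
      have := hfle k x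
      have := hind_le x
      linarith

/-- Key tightness lemma: if `gᵏ ↓ 0` pointwise on an open set `W ⊇ F`, then
`N(F)(gᵏ • v) → 0`. -/
theorem tendsto_smul_zero (hR : ApproximatesOpenSets R) (hnorm : NormSMulCompat R V)
    (hN : IsLocalVectorMeasure R N) {F W : Set X} (hF : MeasurableSet F) (hW : IsOpen W)
    (hFW : F ⊆ W) (g : ℕ → ↥R) (h0 : ∀ k x, 0 ≤ (g k : X →ᵇ ℝ) x)
    (h1 : ∀ k x, (g k : X →ᵇ ℝ) x ≤ 1)
    (hanti : ∀ x k l, k ≤ l → (g l : X →ᵇ ℝ) x ≤ (g k : X →ᵇ ℝ) x)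
    (hto0 : ∀ x ∈ W, Tendsto (fun k => (g k : X →ᵇ ℝ) x) atTop (𝓝 0)) (v : V) :
    Tendsto (fun k => N F ((g k) • v)) atTop (𝓝 0) := by
  rw [NormedAddCommGroup.tendsto_nhds_zero]
  intro ε hε
  set nv : ℝ := ‖v‖ with hnv
  set nF : ℝ := ‖N F‖ with hnF
  have hnv0 : 0 ≤ nv := norm_nonneg v
  have hnF0 : 0 ≤ nF := norm_nonneg (N F)
  set δ : ℝ := ε / (2 * (nv + 1) * (nF + 1)) with hδ
  have hδpos : 0 < δ := by positivity
  set O : ℕ → Set X := fun k => {x | (g k : X →ᵇ ℝ) x < δ} with hOdef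
  have hOopen : ∀ k, IsOpen (O k) := fun k =>
    isOpen_lt (g k : X →ᵇ ℝ).continuous continuous_const
  have hOmono : Monotone fun k => F ∩ O k := by
    intro k l hkl x hx
    exact ⟨hx.1, lt_of_le_of_lt (hanti x k l hkl) hx.2⟩
  have hOunion : (⋃ k, F ∩ O k) = F := by
    apply Set.Subset.antisymm
    · exact Set.iUnion_subset fun k => Set.inter_subset_left
    · intro x hx
      obtain ⟨k, hk⟩ := ((hto0 x (hFW hx)).eventually_lt_const hδpos).exists
      exact Set.mem_iUnion.2 ⟨k, hx, hk⟩
  have hmeasFO : ∀ k, MeasurableSet (F ∩ O k) := fun k => hF.inter (hOopen k).measurableSet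
  have htend := sa_tendsto_mono hN.sigma_additive hmeasFO hOmono
  rw [hOunion] at htend
  have hdisj : ∀ k, Disjoint (F ∩ O k) (F \ O k) :=
    fun k => Set.disjoint_left.2 fun x hx1 hx2 => hx2.2 hx1.2
  have hdiff : ∀ k, N (F \ O k) = N F - N (F ∩ O k) := by
    intro k
    have hu := sa_union hN.sigma_additive (hmeasFO k) (hF.diff (hOopen k).measurableSet)
      (hdisj k)
    rw [Set.inter_union_diff] at hu
    rw [hu]; abel
  have hnormto : Tendsto (fun k => ‖N (F \ O k)‖) atTop (𝓝 0) := by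
    have h2 : Tendsto (fun k => N F - N (F ∩ O k)) atTop (𝓝 (N F - N F)) :=
      tendsto_const_nhds.sub htend
    rw [sub_self] at h2
    have h3 := h2.norm
    rw [norm_zero] at h3
    exact h3.congr fun k => (congrArg norm (hdiff k)).symm
  have hsmall : ∀ᶠ k in atTop, ‖N (F \ O k)‖ < min (ε / (2 * (nv + 1))) 1 :=
    hnormto.eventually_lt_const (lt_min (by positivity) one_pos)
  filter_upwards [hsmall] with k hk
  set a : ℝ := ‖N (F \ O k)‖ with ha
  have ha0 : 0 ≤ a := norm_nonneg _
  have ha1 : a < 1 := lt_of_lt_of_le hk (min_le_right _ _)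
  have haε : a < ε / (2 * (nv + 1)) := lt_of_lt_of_le hk (min_le_left _ _)
  -- decompose g k = s + t
  obtain ⟨s0, hs0R, hs0val⟩ := hR.inf_mem (g k : X →ᵇ ℝ) (const X δ) (g k).2 (hR.const_mem δ)
  set s : ↥R := ⟨s0, hs0R⟩ with hs
  set t : ↥R := g k - s with htdef
  have hsval : ∀ x, (s : X →ᵇ ℝ) x = min ((g k : X →ᵇ ℝ) x) δ := by
    intro x
    have := hs0val x
    simpa using this
  have hdecomp : (g k) • v = s • v + t • v := by
    have h2 : t • v = (g k) • v - s • v := by rw [htdef, sub_smul]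
    rw [h2]; abel
  have hsnorm : ‖(s : X →ᵇ ℝ)‖ ≤ δ := by
    refine (BoundedContinuousFunction.norm_le hδpos.le).2 fun x => ?_
    rw [Real.norm_eq_abs, abs_le, hsval x]
    constructor
    · have h01 := h0 k x
      have : (0:ℝ) ≤ min ((g k : X →ᵇ ℝ) x) δ := le_min h01 hδpos.le
      linarith
    · exact min_le_right _ _
  have hgnorm : ‖(g k : X →ᵇ ℝ)‖ ≤ 1 := by
    refine (BoundedContinuousFunction.norm_le zero_le_one).2 fun x => ?_
    rw [Real.norm_eq_abs, abs_le]
    exact ⟨by linarith [h0 k x], h1 k x⟩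
  have htzero : ∀ x ∈ O k, (t : X →ᵇ ℝ) x = 0 := by
    intro x hx
    have hcoe : (t : X →ᵇ ℝ) x = (g k : X →ᵇ ℝ) x - (s : X →ᵇ ℝ) x := by
      rw [htdef]
      simp
    rw [hcoe, hsval x, min_eq_left (le_of_lt hx)]
    ring
  have hNt : N (F ∩ O k) (t • v) = 0 :=
    borel_local hnorm hN (hOopen k) (locNorm_smul_eq_zero hnorm t v htzero) (hmeasFO k)
      Set.inter_subset_right
  have hsplit : N F ((g k) • v) = N (F ∩ O k) ((g k) • v) + N (F \ O k) ((g k) • v) := by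
    have hu := sa_union hN.sigma_additive (hmeasFO k) (hF.diff (hOopen k).measurableSet)
      (hdisj k)
    rw [Set.inter_union_diff] at hu
    have := congrArg (fun T => T ((g k) • v)) hu
    simpa using this
  have hinter : N (F ∩ O k) ((g k) • v) = N (F ∩ O k) (s • v) := by
    rw [hdecomp, map_add, hNt, add_zero]
  have hopnorm : ‖N (F ∩ O k)‖ ≤ nF + 1 := by
    have h' : N (F ∩ O k) = N F - N (F \ O k) := by rw [hdiff k]; abel
    calc ‖N (F ∩ O k)‖ = ‖N F - N (F \ O k)‖ := by rw [h']
      _ ≤ ‖N F‖ + ‖N (F \ O k)‖ := norm_sub_le _ _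
      _ ≤ nF + 1 := by rw [← hnF, ← ha]; linarith
  have hterm1 : ‖N (F ∩ O k) ((g k) • v)‖ ≤ (nF + 1) * (δ * nv) := by
    rw [hinter]
    calc ‖N (F ∩ O k) (s • v)‖ ≤ ‖N (F ∩ O k)‖ * ‖s • v‖ :=
          (N (F ∩ O k)).le_opNorm (s • v)
      _ ≤ (nF + 1) * (δ * nv) := by
          apply mul_le_mul hopnorm _ (norm_nonneg _) (by positivity)
          calc ‖s • v‖ ≤ ‖(s : X →ᵇ ℝ)‖ * ‖v‖ := norm_subring_smul_le hnorm s v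
            _ ≤ δ * nv := mul_le_mul_of_nonneg_right hsnorm hnv0
  have hterm2 : ‖N (F \ O k) ((g k) • v)‖ ≤ a * nv := by
    calc ‖N (F \ O k) ((g k) • v)‖ ≤ ‖N (F \ O k)‖ * ‖(g k) • v‖ :=
          (N (F \ O k)).le_opNorm _
      _ ≤ a * nv := by
          apply mul_le_mul le_rfl _ (norm_nonneg _) ha0
          calc ‖(g k) • v‖ ≤ ‖(g k : X →ᵇ ℝ)‖ * ‖v‖ := norm_subring_smul_le hnorm _ v
            _ ≤ 1 * nv := mul_le_mul_of_nonneg_right hgnorm hnv0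
            _ = nv := one_mul _
  have htotal : ‖N F ((g k) • v)‖ ≤ (nF + 1) * (δ * nv) + a * nv := by
    rw [hsplit]
    exact (norm_add_le _ _).trans (add_le_add hterm1 hterm2)
  refine lt_of_le_of_lt htotal ?_
  have hf1 : (nF + 1) * (δ * nv) < ε / 2 := by
    have hδval : δ * (2 * (nv + 1) * (nF + 1)) = ε := by
      rw [hδ]
      field_simp
    nlinarith [hδpos, hnv0, hnF0, mul_pos hδpos (by positivity : (0:ℝ) < nF + 1)]
  have hf2 : a * nv < ε / 2 := by
    have h2 : a * (2 * (nv + 1)) < ε := by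
      rw [← lt_div_iff₀ (by positivity)]
      exact haε
    nlinarith
  linarith

/-- Key convergence lemma: `N(E)(gᵏ • v) → N(E ∩ W)(v)` for nice approximations
`gᵏ ↑ χ_W`. -/
theorem tendsto_approx (hR : ApproximatesOpenSets R) (hnorm : NormSMulCompat R V)
    (hN : IsLocalVectorMeasure R N) {E W : Set X} (hE : MeasurableSet E) (hW : IsOpen W)
    (g : ℕ → ↥R) (h0 : ∀ k x, 0 ≤ (g k : X →ᵇ ℝ) x) (h1 : ∀ k x, (g k : X →ᵇ ℝ) x ≤ 1)
    (hmono : ∀ x, Monotone fun k => (g k : X →ᵇ ℝ) x)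
    (hsupp : ∀ k, tsupport ⇑((g k : X →ᵇ ℝ)) ⊆ W)
    (hto1 : ∀ x ∈ W, Tendsto (fun k => (g k : X →ᵇ ℝ) x) atTop (𝓝 1)) (v : V) :
    Tendsto (fun k => N E ((g k) • v)) atTop (𝓝 (N (E ∩ W) v)) := by
  have hdisj : Disjoint (E ∩ W) (E \ W) :=
    Set.disjoint_left.2 fun x hx1 hx2 => hx2.2 hx1.2
  have hsplit : ∀ k, N E ((g k) • v) = N (E ∩ W) ((g k) • v) := by
    intro k
    have hu := sa_union hN.sigma_additive (hE.inter hW.measurableSet)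
      (hE.diff hW.measurableSet) hdisj
    rw [Set.inter_union_diff] at hu
    have happ := congrArg (fun T => T ((g k) • v)) hu
    simp only [ContinuousLinearMap.add_apply] at happ
    have hzero : N (E \ W) ((g k) • v) = 0 := by
      refine borel_local hnorm hN (isClosed_tsupport ⇑((g k : X →ᵇ ℝ))).isOpen_compl
        (locNorm_smul_eq_zero hnorm (g k) v fun x hx => image_eq_zero_of_notMem_tsupport hx)
        (hE.diff hW.measurableSet) ?_
      intro x hx
      exact fun hmem => hx.2 ((hsupp k) hmem)
    rw [happ, hzero, add_zero]
  -- complementary sequence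
  set g' : ℕ → ↥R := fun k => 1 - g k with hg'
  have hg'coe : ∀ k x, ((g' k : ↥R) : X →ᵇ ℝ) x = 1 - (g k : X →ᵇ ℝ) x := by
    intro k x
    rw [hg']
    simp
  have hdec : Tendsto (fun k => N (E ∩ W) ((g' k) • v)) atTop (𝓝 0) := by
    refine tendsto_smul_zero hR hnorm hN (hE.inter hW.measurableSet) hW
      Set.inter_subset_right g' ?_ ?_ ?_ ?_ v
    · intro k x; rw [hg'coe]; linarith [h1 k x]
    · intro k x; rw [hg'coe]; linarith [h0 k x]
    · intro x k l hkl
      rw [hg'coe, hg'coe]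
      have := hmono x hkl
      linarith [this]
    · intro x hx
      have h2 : Tendsto (fun k => 1 - (g k : X →ᵇ ℝ) x) atTop (𝓝 (1 - 1)) :=
        tendsto_const_nhds.sub (hto1 x hx)
      rw [sub_self] at h2
      exact h2.congr fun k => (hg'coe k x).symm
  have hval : ∀ k, N (E ∩ W) ((g k) • v) = N (E ∩ W) v - N (E ∩ W) ((g' k) • v) := by
    intro k
    have : (g' k) • v = v - (g k) • v := by
      rw [hg']
      rw [sub_smul, one_smul]
    rw [this, map_sub]
    ring
  have hfinal : Tendsto (fun k => N (E ∩ W) v - N (E ∩ W) ((g' k) • v)) atTop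
      (𝓝 (N (E ∩ W) v - 0)) := tendsto_const_nhds.sub hdec
  rw [sub_zero] at hfinal
  refine hfinal.congr fun k => ?_
  rw [← hval k, ← hsplit k]

/-- Superadditivity of `A ↦ ‖N A‖` on disjoint Borel sets. -/
theorem norm_superadditive [CompleteSpace X] [TopologicalSpace.SeparableSpace X]
    (hR : ApproximatesOpenSets R) (hnorm : NormSMulCompat R V)
    (hN : IsLocalVectorMeasure R N) {A B : Set X}
    (hA : MeasurableSet A) (hB : MeasurableSet B) (hd : Disjoint A B) :
    ‖N A‖ + ‖N B‖ ≤ ‖N (A ∪ B)‖ := by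
  classical
  refine le_of_forall_pos_le_add ?_
  intro ε hε
  have hε6pos : 0 < ε / 6 := by positivity
  obtain ⟨v, hv1, hv2⟩ := exists_near_opNorm (N A) hε6pos
  obtain ⟨w, hw1, hw2⟩ := exists_near_opNorm (N B) hε6pos
  set μv := scalarMeasure hN.sigma_additive v with hμv
  set μw := scalarMeasure hN.sigma_additive w with hμw
  haveI hfin1 : IsFiniteMeasure μv.totalVariation := by
    rw [MeasureTheory.SignedMeasure.totalVariation]
    infer_instance
  haveI hfin2 : IsFiniteMeasure μw.totalVariation := by
    rw [MeasureTheory.SignedMeasure.totalVariation]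
    infer_instance
  set ν : Measure X := μv.totalVariation + μw.totalVariation with hν
  haveI hfinν : IsFiniteMeasure ν := by rw [hν]; infer_instance
  have hμvS : ∀ {S : Set X}, MeasurableSet S → μv S = N S v := fun {S} hS => by
    show (if MeasurableSet S then N S v else 0) = N S v
    exact if_pos hS
  have hμwS : ∀ {S : Set X}, MeasurableSet S → μw S = N S w := fun {S} hS => by
    show (if MeasurableSet S then N S w else 0) = N S w
    exact if_pos hS
  have hboundv : ∀ {S : Set X}, MeasurableSet S → |N S v| ≤ (ν S).toReal := by
    intro S hS
    rw [← hμvS hS]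
    refine (abs_apply_le_tv μv hS).trans ?_
    refine ENNReal.toReal_mono (measure_ne_top ν S) ?_
    rw [hν]
    exact le_add_of_nonneg_right (by simp) |>.trans_eq (Measure.add_apply _ _ _).symm
  have hboundw : ∀ {S : Set X}, MeasurableSet S → |N S w| ≤ (ν S).toReal := by
    intro S hS
    rw [← hμwS hS]
    refine (abs_apply_le_tv μw hS).trans ?_
    refine ENNReal.toReal_mono (measure_ne_top ν S) ?_
    rw [hν]
    exact le_add_of_nonneg_left (by simp) |>.trans_eq (Measure.add_apply _ _ _).symm
  have hνmono : ∀ {S T : Set X}, S ⊆ T → (ν S).toReal ≤ (ν T).toReal := fun hST =>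
    ENNReal.toReal_mono (measure_ne_top ν _) (measure_mono hST)
  have hεne : (ENNReal.ofReal (ε / 6)) ≠ 0 := (ENNReal.ofReal_pos.2 hε6pos).ne'
  -- inner closed approximations
  obtain ⟨C₁, hC₁A, hC₁closed, hC₁⟩ := hA.exists_isClosed_diff_lt (measure_ne_top ν A) hεne
  obtain ⟨C₂, hC₂B, hC₂closed, hC₂⟩ := hB.exists_isClosed_diff_lt (measure_ne_top ν B) hεne
  have hdC : Disjoint C₁ C₂ := hd.mono hC₁A hC₂B
  obtain ⟨G₁, G₂, hG₁open, hG₂open, hC₁G, hC₂G, hGdisj⟩ :=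
    normal_separation hC₁closed hC₂closed hdC
  obtain ⟨H₁, hH₁sup, hH₁open, hH₁⟩ :=
    hC₁closed.measurableSet.exists_isOpen_diff_lt (measure_ne_top ν C₁) hεne
  obtain ⟨H₂, hH₂sup, hH₂open, hH₂⟩ :=
    hC₂closed.measurableSet.exists_isOpen_diff_lt (measure_ne_top ν C₂) hεne
  set W₁ : Set X := G₁ ∩ H₁ with hW₁def
  set W₂ : Set X := G₂ ∩ H₂ with hW₂def
  have hW₁open : IsOpen W₁ := hG₁open.inter hH₁open
  have hW₂open : IsOpen W₂ := hG₂open.inter hH₂open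
  have hC₁W : C₁ ⊆ W₁ := Set.subset_inter hC₁G hH₁sup
  have hC₂W : C₂ ⊆ W₂ := Set.subset_inter hC₂G hH₂sup
  have hW₁ν : ν (W₁ \ C₁) < ENNReal.ofReal (ε / 6) :=
    lt_of_le_of_lt (measure_mono (Set.diff_subset_diff_left Set.inter_subset_right)) hH₁.2
  have hW₂ν : ν (W₂ \ C₂) < ENNReal.ofReal (ε / 6) :=
    lt_of_le_of_lt (measure_mono (Set.diff_subset_diff_left Set.inter_subset_right)) hH₂.2
  have hWdisj : Disjoint W₁ W₂ := hGdisj.mono Set.inter_subset_left Set.inter_subset_left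
  -- approximating sequences
  obtain ⟨g1, hg10, hg11, hg1mono, hg1supp, hg1tend, hg1norm⟩ := approx_nice hR hW₁open
  obtain ⟨g2, hg20, hg21, hg2mono, hg2supp, hg2tend, hg2norm⟩ := approx_nice hR hW₂open
  -- uniform bound on the glued vectors
  have hu1 : ∀ k, ‖g1 k • v + g2 k • w‖ ≤ 1 := by
    intro k
    classical
    have hpair : ((({0, 1} : Finset ℕ) : Set ℕ)).Pairwise fun i j =>
        Disjoint (tsupport ⇑(((if i = 0 then g1 k else g2 k : ↥R)) : X →ᵇ ℝ))
          (tsupport ⇑(((if j = 0 then g1 k else g2 k : ↥R)) : X →ᵇ ℝ)) := by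
      intro i hi j hj hij
      simp only [Finset.coe_insert, Set.mem_insert_iff, Finset.coe_singleton,
        Set.mem_singleton_iff] at hi hj
      rcases hi with rfl | rfl <;> rcases hj with rfl | rfl <;> simp_all
      · exact Set.disjoint_of_subset (Set.subset_inter_iff.2 (hg1supp k)) (Set.subset_inter_iff.2 (hg2supp k)) hWdisj
      · exact (Set.disjoint_of_subset (Set.subset_inter_iff.2 (hg1supp k)) (Set.subset_inter_iff.2 (hg2supp k)) hWdisj).symm
    have := hnorm {0, 1} (fun i => if i = 0 then g1 k else g2 k)
      (fun i => if i = 0 then v else w) 1 1 zero_le_one zero_le_one hpair ?_ ?_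
    · have hsum : ∑ i ∈ ({0, 1} : Finset ℕ),
          (if i = 0 then g1 k else g2 k) • (if i = 0 then v else w)
          = g1 k • v + g2 k • w := by
        rw [Finset.sum_pair (by norm_num : (0:ℕ) ≠ 1)]
        norm_num
      rw [hsum] at this
      simpa using this
    · intro i _
      by_cases hi : i = 0
      · simpa [hi] using hg1norm k
      · simpa [hi] using hg2norm k
    · intro i _
      by_cases hi : i = 0
      · simpa [hi] using hv1
      · simpa [hi] using hw1
  -- evaluation bound
  have hNu : ∀ k, N A (g1 k • v) + N A (g2 k • w) + (N B (g1 k • v) + N B (g2 k • w))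
      ≤ ‖N (A ∪ B)‖ := by
    intro k
    have hadd := sa_union hN.sigma_additive hA hB hd
    have happ := congrArg (fun T => T (g1 k • v + g2 k • w)) hadd
    simp only [ContinuousLinearMap.add_apply] at happ
    have hle : N (A ∪ B) (g1 k • v + g2 k • w) ≤ ‖N (A ∪ B)‖ := by
      calc N (A ∪ B) (g1 k • v + g2 k • w) ≤ |N (A ∪ B) (g1 k • v + g2 k • w)| :=
            le_abs_self _
        _ ≤ ‖N (A ∪ B)‖ * ‖g1 k • v + g2 k • w‖ := by
            rw [← Real.norm_eq_abs]
            exact (N (A ∪ B)).le_opNorm _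
        _ ≤ ‖N (A ∪ B)‖ * 1 := mul_le_mul_of_nonneg_left (hu1 k) (norm_nonneg _)
        _ = ‖N (A ∪ B)‖ := mul_one _
    rw [happ] at hle
    simp only [map_add] at hle
    linarith
  -- pass to the limit
  have l1 := tendsto_approx hR hnorm hN hA hW₁open g1 hg10 hg11 hg1mono hg1supp hg1tend v
  have l2 := tendsto_approx hR hnorm hN hA hW₂open g2 hg20 hg21 hg2mono hg2supp hg2tend w
  have l3 := tendsto_approx hR hnorm hN hB hW₁open g1 hg10 hg11 hg1mono hg1supp hg1tend v
  have l4 := tendsto_approx hR hnorm hN hB hW₂open g2 hg20 hg21 hg2mono hg2supp hg2tend w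
  have hlim : N (A ∩ W₁) v + N (A ∩ W₂) w + (N (B ∩ W₁) v + N (B ∩ W₂) w)
      ≤ ‖N (A ∪ B)‖ :=
    le_of_tendsto ((l1.add l2).add (l3.add l4)) (Filter.Eventually.of_forall hNu)
  -- error estimates
  have hofReal : ∀ {S : Set X}, ν S < ENNReal.ofReal (ε / 6) → (ν S).toReal < ε / 6 := by
    intro S hS
    rw [← ENNReal.lt_ofReal_iff_toReal_lt (measure_ne_top ν S)]
    exact hS
  have e1 : N A v - ε / 6 ≤ N (A ∩ W₁) v := by
    have hu := sa_union hN.sigma_additive (hA.inter hW₁open.measurableSet)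
      (hA.diff hW₁open.measurableSet)
      (Set.disjoint_left.2 fun x hx1 hx2 => hx2.2 hx1.2)
    rw [Set.inter_union_diff] at hu
    have happ := congrArg (fun T => T v) hu
    simp only [ContinuousLinearMap.add_apply] at happ
    have habs : |N (A \ W₁) v| < ε / 6 := by
      refine lt_of_le_of_lt (hboundv (hA.diff hW₁open.measurableSet)) ?_
      refine lt_of_le_of_lt (hνmono (Set.diff_subset_diff_right hC₁W)) (hofReal hC₁)
    have := abs_lt.1 habs
    linarith [happ.le, happ.ge]
  have e3 : N B w - ε / 6 ≤ N (B ∩ W₂) w := by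
    have hu := sa_union hN.sigma_additive (hB.inter hW₂open.measurableSet)
      (hB.diff hW₂open.measurableSet)
      (Set.disjoint_left.2 fun x hx1 hx2 => hx2.2 hx1.2)
    rw [Set.inter_union_diff] at hu
    have happ := congrArg (fun T => T w) hu
    simp only [ContinuousLinearMap.add_apply] at happ
    have habs : |N (B \ W₂) w| < ε / 6 := by
      refine lt_of_le_of_lt (hboundw (hB.diff hW₂open.measurableSet)) ?_
      refine lt_of_le_of_lt (hνmono (Set.diff_subset_diff_right hC₂W)) (hofReal hC₂)
    have := abs_lt.1 habs
    linarith [happ.le, happ.ge]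
  have e2 : |N (B ∩ W₁) v| < ε / 6 := by
    refine lt_of_le_of_lt (hboundv (hB.inter hW₁open.measurableSet)) ?_
    refine lt_of_le_of_lt (hνmono ?_) (hofReal hW₁ν)
    intro x hx
    exact ⟨hx.2, fun hC => Set.disjoint_left.1 hd (hC₁A hC) hx.1⟩
  have e4 : |N (A ∩ W₂) w| < ε / 6 := by
    refine lt_of_le_of_lt (hboundw (hA.inter hW₂open.measurableSet)) ?_
    refine lt_of_le_of_lt (hνmono ?_) (hofReal hW₂ν)
    intro x hx
    exact ⟨hx.2, fun hC => Set.disjoint_left.1 hd hx.1 (hC₂B hC)⟩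
  have e2' := abs_lt.1 e2
  have e4' := abs_lt.1 e4
  have : ‖N A‖ + ‖N B‖ - 6 * (ε / 6) ≤ ‖N (A ∪ B)‖ := by linarith
  linarith

/-- Summing over finite disjoint families. -/
theorem sum_norm_le_aux [CompleteSpace X] [TopologicalSpace.SeparableSpace X]
    {ι : Type*} [DecidableEq ι]
    (hR : ApproximatesOpenSets R) (hnorm : NormSMulCompat R V)
    (hN : IsLocalVectorMeasure R N) (s : Finset ι) :
    ∀ A : ι → Set X, (∀ i ∈ s, MeasurableSet (A i)) →
      ((s : Set ι)).Pairwise (Disjoint on A) →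
      ∑ i ∈ s, ‖N (A i)‖ ≤ ‖N (⋃ i ∈ s, A i)‖ := by
  induction s using Finset.induction_on with
  | empty => intro A _ _; simp
  | @insert a s ha ih =>
    intro A hmeas hpair
    have hmeas' : ∀ i ∈ s, MeasurableSet (A i) := fun i hi =>
      hmeas i (Finset.mem_insert_of_mem hi)
    have hpair' : ((s : Set ι)).Pairwise (Disjoint on A) := by
      refine hpair.mono ?_
      intro x hx
      exact Finset.mem_coe.2 (Finset.mem_insert_of_mem (Finset.mem_coe.1 hx))
    have hdisj : Disjoint (A a) (⋃ i ∈ s, A i) := by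
      refine Set.disjoint_left.2 fun x hxa hxu => ?_
      rcases Set.mem_iUnion₂.1 hxu with ⟨i, hi, hxi⟩
      have hne : a ≠ i := fun h => ha (h ▸ hi)
      exact Set.disjoint_left.1
        (hpair (Finset.mem_coe.2 (Finset.mem_insert_self a s))
          (Finset.mem_coe.2 (Finset.mem_insert_of_mem hi)) hne) hxa hxi
    rw [Finset.sum_insert ha, Finset.set_biUnion_insert]
    calc ‖N (A a)‖ + ∑ i ∈ s, ‖N (A i)‖
        ≤ ‖N (A a)‖ + ‖N (⋃ i ∈ s, A i)‖ := by
          linarith [ih A hmeas' hpair']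
      _ ≤ ‖N (A a ∪ ⋃ i ∈ s, A i)‖ :=
          norm_superadditive hR hnorm hN (hmeas a (Finset.mem_insert_self a s))
            (s.measurableSet_biUnion hmeas') hdisj

end AuxStatement5

/-- a local vector measure has bounded variation, and in fact
`|N|(A) = ‖N(A)‖'` for every Borel set `A`. -/
theorem statement5 {X : Type*} [MetricSpace X] [CompleteSpace X]
    [TopologicalSpace.SeparableSpace X] [MeasurableSpace X] [BorelSpace X]
    {V : Type*} [NormedAddCommGroup V] [NormedSpace ℝ V]
    (R : Subring (X →ᵇ ℝ)) [Module R V]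
    (hR : ApproximatesOpenSets R) (hconst : ConstSMulCompat R V) (hnorm : NormSMulCompat R V)
    (N : Set X → V →L[ℝ] ℝ) (hN : IsLocalVectorMeasure R N) :
    totalVar N Set.univ < ⊤ ∧
      ∀ A : Set X, MeasurableSet A → totalVar N A = (‖N A‖₊ : ℝ≥0∞) := by
  have key : ∀ B : Set X, MeasurableSet B → totalVar N B = (‖N B‖₊ : ℝ≥0∞) := by
    intro B hB
    apply le_antisymm
    · refine iSup_le fun n => iSup_le fun A => iSup_le fun hcond => ?_
      obtain ⟨hmeas, hpair, hunion⟩ := hcond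
      have hsum : ∑ i : Fin n, ‖N (A i)‖ ≤ ‖N B‖ := by
        have h1 := sum_norm_le_aux hR hnorm hN Finset.univ A (fun i _ => hmeas i)
          (hpair.set_pairwise _)
        have h2 : (⋃ i ∈ (Finset.univ : Finset (Fin n)), A i) = B := by
          rw [← hunion]
          ext x
          simp
        rwa [h2] at h1
      calc ∑ i : Fin n, (‖N (A i)‖₊ : ℝ≥0∞)
          = ((∑ i : Fin n, ‖N (A i)‖₊ : NNReal) : ℝ≥0∞) := by
            rw [ENNReal.coe_finset_sum]
        _ ≤ (‖N B‖₊ : ℝ≥0∞) := by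
            rw [ENNReal.coe_le_coe, ← NNReal.coe_le_coe, NNReal.coe_sum]
            simpa [coe_nnnorm] using hsum
    · have h1 : (‖N B‖₊ : ℝ≥0∞) ≤ ∑ i : Fin 1, (‖N ((fun _ => B) i)‖₊ : ℝ≥0∞) := by
        simp
      refine le_trans h1 ?_
      exact le_iSup_of_le 1 (le_iSup_of_le (fun _ => B)
        (le_iSup_of_le ⟨fun _ => hB,
          fun i j hij => absurd (Subsingleton.elim i j) hij,
          Set.iUnion_const B⟩ le_rfl))
  exact ⟨by rw [key _ MeasurableSet.univ]; exact ENNReal.coe_lt_top, key⟩
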